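/- If v ≡ 3 (mod 4) is a prime power and D ⊆ GF(v) is the set of nonzero squares, then the development {D + g : g ∈ GF(v)} is a 2-(v, (v−1)/2, (v−3)/4) design. -/

import Mathlib

open Finset

section Aux

variable {F : Type*} [Field F] [Fintype F] [DecidableEq F]

private lemma paley_aux_card (hF : ringChar F ≠ 2) :
    2 * (Finset.univ.filter (fun x : F => x ≠ 0 ∧ IsSquare x)).card = Fintype.card F - 1 := by
  classical
  set D : Finset F := Finset.univ.filter (fun x : F => x ≠ 0 ∧ IsSquare x) with hD
  set V : Finset F := Finset.univ.filter (fun x : F => x ≠ 0) with hV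
  have hVcard : V.card = Fintype.card F - 1 := by
    have : V = Finset.univ.erase (0 : F) := by
      ext x; simp [hV, Finset.mem_erase]
    rw [this, Finset.card_erase_of_mem (Finset.mem_univ _), Finset.card_univ]
  have himg : V.image (fun x : F => x * x) = D := by
    ext a
    simp only [hV, hD, Finset.mem_image, Finset.mem_filter, Finset.mem_univ, true_and]
    constructor
    · rintro ⟨x, hx, rfl⟩
      exact ⟨mul_ne_zero hx hx, ⟨x, rfl⟩⟩
    · rintro ⟨ha, r, rfl⟩
      exact ⟨r, fun h => ha (by simp [h]), rfl⟩
  have hfiber : ∀ a ∈ D, (V.filter fun x => x * x = a).card = 2 := by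
    intro a ha
    simp only [hD, Finset.mem_filter, Finset.mem_univ, true_and] at ha
    obtain ⟨ha0, r, rfl⟩ := ha
    have hr : r ≠ 0 := fun h => ha0 (by simp [h])
    have hset : (V.filter fun x => x * x = r * r) = {r, -r} := by
      ext x
      simp only [hV, Finset.mem_filter, Finset.mem_univ, true_and, Finset.mem_insert,
        Finset.mem_singleton]
      constructor
      · rintro ⟨hx, hxx⟩
        rcases mul_self_eq_mul_self_iff.mp hxx with h | h
        · exact Or.inl h
        · exact Or.inr h
      · rintro (rfl | rfl)
        · exact ⟨hr, rfl⟩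
        · exact ⟨neg_ne_zero.mpr hr, by ring⟩
    rw [hset, Finset.card_insert_of_notMem, Finset.card_singleton]
    simp only [Finset.mem_singleton]
    intro h
    have h2 : (2 : F) * r = 0 := by linear_combination h
    rcases mul_eq_zero.mp h2 with h' | h'
    · exact Ring.two_ne_zero hF h'
    · exact hr h'
  have := Finset.card_eq_sum_card_image (fun x : F => x * x) V
  rw [himg] at this
  rw [Finset.sum_congr rfl hfiber] at this
  rw [Finset.sum_const, smul_eq_mul] at this
  omega

end Aux

/-- If v ≡ 3 (mod 4) is a prime power and D ⊆ GF(v) is the set of nonzero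
squares, then the development {D + g : g ∈ GF(v)} is a 2-(v,(v−1)/2,(v−3)/4)
design. -/
theorem paley_development_design (v : ℕ) (F : Type*) [Field F] [Fintype F] [DecidableEq F]
    (hcard : Fintype.card F = v) (hv : v % 4 = 3) :
    let D : Finset F := Finset.univ.filter (fun x : F => x ≠ 0 ∧ IsSquare x)
    (∀ g : F, (D.image (· + g)).card = (v - 1) / 2) ∧
    (∀ T : Finset F, T.card = 2 →
      (Finset.univ.filter (fun g : F => T ⊆ D.image (· + g))).card = (v - 3) / 4) := by
  intro D
  have hchar : ringChar F ≠ 2 := by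
    intro h
    have := FiniteField.even_card_of_char_two (F := F) h
    omega
  have hDcard : 2 * D.card = v - 1 := by
    have := paley_aux_card (F := F) hchar
    rw [hcard] at this
    exact this
  -- membership in D
  have hDmem : ∀ x : F, x ∈ D ↔ x ≠ 0 ∧ IsSquare x := by
    intro x; simp [D]
  -- D is closed under multiplication by nonzero squares
  have hDmul : ∀ s x : F, s ≠ 0 → IsSquare s → x ∈ D → s * x ∈ D := by
    intro s x hs hsq hx
    rw [hDmem] at hx ⊢
    exact ⟨mul_ne_zero hs hx.1, hsq.mul hx.2⟩
  -- the counting function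
  set N : F → ℕ := fun c => (D.filter fun x => x + c ∈ D).card with hN
  have hN0 : N 0 = D.card := by
    simp [hN, Finset.filter_true_of_mem (fun x hx => by simpa using hx)]
  -- invariance under negation
  have hNneg : ∀ c : F, N (-c) = N c := by
    intro c
    refine Finset.card_nbij' (fun x => x + -c) (fun y => y + c) ?_ ?_ ?_ ?_
    · intro x hx
      simp only [Finset.mem_coe, Finset.mem_filter] at hx ⊢
      exact ⟨hx.2, by simpa using hx.1⟩
    · intro y hy
      simp only [Finset.mem_coe, Finset.mem_filter] at hy ⊢
      exact ⟨hy.2, by simpa using hy.1⟩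
    · intro x _; ring
    · intro y _; ring
  -- invariance under multiplication by nonzero squares
  have hNmul : ∀ s c : F, s ≠ 0 → IsSquare s → N (s * c) = N c := by
    intro s c hs hsq
    have hs' : s⁻¹ ≠ 0 := inv_ne_zero hs
    have hsq' : IsSquare s⁻¹ := by
      obtain ⟨r, rfl⟩ := hsq
      exact ⟨r⁻¹, by rw [mul_inv]⟩
    refine Finset.card_nbij' (fun x => s⁻¹ * x) (fun y => s * y) ?_ ?_ ?_ ?_
    · intro x hx
      simp only [Finset.mem_coe, Finset.mem_filter] at hx ⊢
      refine ⟨hDmul _ _ hs' hsq' hx.1, ?_⟩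
      have : s⁻¹ * x + c = s⁻¹ * (x + s * c) := by
        rw [mul_add, inv_mul_cancel_left₀ hs]
      rw [this]
      exact hDmul _ _ hs' hsq' hx.2
    · intro y hy
      simp only [Finset.mem_coe, Finset.mem_filter] at hy ⊢
      refine ⟨hDmul _ _ hs hsq hy.1, ?_⟩
      have : s * y + s * c = s * (y + c) := by ring
      rw [this]
      exact hDmul _ _ hs hsq hy.2
    · intro x _; field_simp
    · intro y _; field_simp
  -- all nonzero c give the same count
  have hNone : ∀ c : F, c ≠ 0 → N c = N 1 := by
    intro c hc
    by_cases hsq : IsSquare c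
    · rw [← mul_one c]; exact hNmul c 1 hc hsq
    · have hm1 : ¬IsSquare (-1 : F) := by
        rw [FiniteField.isSquare_neg_one_iff, hcard]
        simpa using hv
      have hnegsq : IsSquare (-c) := by
        have h1 : quadraticChar F (-1) = -1 :=
          quadraticChar_neg_one_iff_not_isSquare.mpr hm1
        have h2 : quadraticChar F c = -1 :=
          quadraticChar_neg_one_iff_not_isSquare.mpr hsq
        have h3 : quadraticChar F (-c) = 1 := by
          have : (-c : F) = -1 * c := by ring
          rw [this, map_mul, h1, h2]; ring
        exact (quadraticChar_one_iff_isSquare (neg_ne_zero.mpr hc)).mp h3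
      have : N c = N (-(-c)) := by rw [neg_neg]
      rw [this, hNneg (-c), ← mul_one (-c), hNmul (-c) 1 (neg_ne_zero.mpr hc) hnegsq]
  -- total sum
  have hsum : ∑ c : F, N c = D.card * D.card := by
    have step1 : ∀ c : F, N c = ∑ x ∈ D, if x + c ∈ D then 1 else 0 := by
      intro c
      simp only [hN]
      rw [Finset.card_filter]
    calc ∑ c : F, N c = ∑ c : F, ∑ x ∈ D, if x + c ∈ D then 1 else 0 := by
          exact Finset.sum_congr rfl fun c _ => step1 c
      _ = ∑ x ∈ D, ∑ c : F, if x + c ∈ D then 1 else 0 := Finset.sum_comm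
      _ = ∑ x ∈ D, (Finset.univ.filter fun c : F => x + c ∈ D).card := by
          refine Finset.sum_congr rfl fun x _ => ?_
          rw [Finset.card_filter]
      _ = ∑ x ∈ D, D.card := by
          refine Finset.sum_congr rfl fun x _ => ?_
          refine Finset.card_nbij' (fun c => x + c) (fun d => d - x) ?_ ?_ ?_ ?_
          · intro c hc; simpa using (Finset.mem_filter.mp hc).2
          · intro d hd; simp [Finset.mem_coe.mp hd]
          · intro c _; ring
          · intro d _; ring
      _ = D.card * D.card := by rw [Finset.sum_const, smul_eq_mul]
  -- split off c = 0
  have hsplit : ∑ c : F, N c = N 0 + (Fintype.card F - 1) * N 1 := by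
    rw [← Finset.add_sum_erase _ _ (Finset.mem_univ (0 : F))]
    congr 1
    rw [Finset.sum_congr rfl (fun c hc => hNone c (Finset.ne_of_mem_erase hc)),
      Finset.sum_const, smul_eq_mul, Finset.card_erase_of_mem (Finset.mem_univ _),
      Finset.card_univ]
  -- arithmetic
  have hkey : (v - 1) * N 1 + D.card = D.card * D.card := by
    rw [← hsum, hsplit, hN0, hcard]; ring
  obtain ⟨m, hm⟩ : ∃ m, v = 4 * m + 3 := ⟨v / 4, by omega⟩
  have hk : D.card = 2 * m + 1 := by omega
  have hv1 : v - 1 = 4 * m + 2 := by omega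
  rw [hk, hv1] at hkey
  have hfinal : (2 * m + 1) * (2 * N 1 + 1) = (2 * m + 1) * (2 * m + 1) := by
    calc (2 * m + 1) * (2 * N 1 + 1) = (4 * m + 2) * N 1 + (2 * m + 1) := by ring
      _ = (2 * m + 1) * (2 * m + 1) := hkey
  have hN1 : N 1 = m := by
    have := Nat.eq_of_mul_eq_mul_left (by omega : 0 < 2 * m + 1) hfinal
    omega
  constructor
  · intro g
    rw [Finset.card_image_of_injective _ (add_left_injective g)]
    omega
  · intro T hT
    obtain ⟨a, b, hab, rfl⟩ := Finset.card_eq_two.mp hT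
    have hmemim : ∀ (x g : F), x ∈ D.image (· + g) ↔ x - g ∈ D := by
      intro x g
      simp only [Finset.mem_image]
      constructor
      · rintro ⟨d, hd, rfl⟩; simpa using hd
      · intro h; exact ⟨x - g, h, by ring⟩
    have hScard : (Finset.univ.filter fun g : F => {a, b} ⊆ D.image (· + g)).card
        = N (b - a) := by
      refine Finset.card_nbij' (fun g => a - g) (fun x => a - x) ?_ ?_ ?_ ?_
      · intro g hg
        simp only [Finset.mem_coe, Finset.mem_filter, Finset.insert_subset_iff,
          Finset.singleton_subset_iff] at hg
        obtain ⟨-, ha, hb⟩ := hg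
        rw [hmemim] at ha hb
        simp only [Finset.mem_coe, Finset.mem_filter]
        refine ⟨ha, ?_⟩
        have : a - g + (b - a) = b - g := by ring
        rw [this]; exact hb
      · intro x hx
        simp only [Finset.mem_coe, Finset.mem_filter] at hx
        simp only [Finset.mem_coe, Finset.mem_filter, Finset.mem_univ, true_and, Finset.insert_subset_iff,
          Finset.singleton_subset_iff, hmemim]
        constructor
        · have : a - (a - x) = x := by ring
          rw [this]; exact hx.1
        · have : b - (a - x) = x + (b - a) := by ring
          rw [this]; exact hx.2
      · intro g _; ring
      · intro x _; ring
    rw [hScard, hNone (b - a) (sub_ne_zero.mpr (Ne.symm hab)), hN1]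
    omega
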